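/- Let Γ be an admissible subset of C_b(S) and ν a probability measure on S. Then G_Γ(μ‖ν) ≥ 0 for all probability measures μ, and G_Γ(μ‖ν) = 0 if and only if μ = ν. -/

import Mathlib

open MeasureTheory BoundedContinuousFunction Real

/-- The weak topology on `C_b(S)` induced by integration against finite measures
(equivalently, finite signed measures). -/
noncomputable def weakTopology (S : Type*) [TopologicalSpace S] [MeasurableSpace S] :
    TopologicalSpace (S →ᵇ ℝ) :=
  ⨅ μ : {μ : Measure S // IsFiniteMeasure μ},
    TopologicalSpace.induced (fun f : S →ᵇ ℝ => ∫ x, f x ∂μ.1) inferInstance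

/-- A set `Γ ⊂ C_b(S)` is admissible if it is convex, closed in the weak topology,
symmetric, contains all constants, and is measure-determining for `P(S)`. -/
def Admissible {S : Type*} [TopologicalSpace S] [MeasurableSpace S]
    (Γ : Set (S →ᵇ ℝ)) : Prop :=
  Convex ℝ Γ ∧ @IsClosed _ (weakTopology S) Γ ∧ (∀ g ∈ Γ, -g ∈ Γ) ∧
    (∀ r : ℝ, BoundedContinuousFunction.const S r ∈ Γ) ∧
    ∀ μ ν : Measure S, IsProbabilityMeasure μ → IsProbabilityMeasure ν → μ ≠ ν →
      ∃ g ∈ Γ, ∫ x, g x ∂μ ≠ ∫ x, g x ∂ν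

/-- The `Γ`-divergence `G_Γ(μ‖ν) = sup_{g ∈ Γ} { ∫ g dμ − log ∫ e^g dν }`. -/
noncomputable def gDiv {S : Type*} [TopologicalSpace S] [MeasurableSpace S]
    (Γ : Set (S →ᵇ ℝ)) (μ ν : Measure S) : EReal :=
  ⨆ g ∈ Γ, (((∫ x, g x ∂μ) - Real.log (∫ x, Real.exp (g x) ∂ν) : ℝ) : EReal)

section Helpers
variable {S : Type*} [TopologicalSpace S] [MeasurableSpace S] [OpensMeasurableSpace S]

lemma exp_comp_integrable (g : S →ᵇ ℝ) (ν : Measure S) [IsFiniteMeasure ν] :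
    Integrable (fun x => Real.exp (g x)) ν := by
  refine Integrable.mono' (integrable_const (Real.exp ‖g‖))
    ((Real.continuous_exp.comp g.continuous).aestronglyMeasurable) ?_
  filter_upwards with x
  rw [Real.norm_eq_abs, Real.abs_exp]
  exact Real.exp_le_exp.mpr ((le_abs_self _).trans (g.norm_coe_le_norm x))

lemma jensen_aux (g : S →ᵇ ℝ) (ν : Measure S) [IsProbabilityMeasure ν] :
    ∫ x, g x ∂ν ≤ Real.log (∫ x, Real.exp (g x) ∂ν) := by
  set c := ∫ x, g x ∂ν with hc
  have hig : Integrable (fun x => g x) ν := g.integrable ν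
  have hie : Integrable (fun x => Real.exp (g x)) ν := exp_comp_integrable g ν
  have hpt : ∀ x, Real.exp c * (1 + (g x - c)) ≤ Real.exp (g x) := by
    intro x
    have h1 : 1 + (g x - c) ≤ Real.exp (g x - c) := by
      have := Real.add_one_le_exp (g x - c); linarith
    calc Real.exp c * (1 + (g x - c)) ≤ Real.exp c * Real.exp (g x - c) := by
          exact mul_le_mul_of_nonneg_left h1 (Real.exp_pos c).le
      _ = Real.exp (g x) := by rw [← Real.exp_add]; ring_nf
  have hil : Integrable (fun x => Real.exp c * (1 + (g x - c))) ν := by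
    exact (((integrable_const (1:ℝ)).add (hig.sub (integrable_const c))).const_mul _)
  have hle : Real.exp c ≤ ∫ x, Real.exp (g x) ∂ν := by
    have h2 : ∫ x, Real.exp c * (1 + (g x - c)) ∂ν = Real.exp c := by
      rw [MeasureTheory.integral_const_mul]
      have : ∫ x, (1 + (g x - c)) ∂ν = 1 := by
        have hsub : Integrable (fun x => g x - c) ν := by exact hig.sub (integrable_const c)
        rw [integral_add (integrable_const 1) hsub, integral_sub hig (integrable_const c)]
        simp [← hc]
      rw [this, mul_one]
    calc Real.exp c = ∫ x, Real.exp c * (1 + (g x - c)) ∂ν := h2.symm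
      _ ≤ ∫ x, Real.exp (g x) ∂ν := integral_mono hil hie hpt
  exact (Real.le_log_iff_exp_le ((Real.exp_pos c).trans_le hle)).mpr hle

lemma exp_quad_bound {x : ℝ} (hx : |x| ≤ 1) : Real.exp x ≤ 1 + x + x ^ 2 := by
  have h := Real.exp_bound hx (by norm_num : (0:ℕ) < 2)
  have h1 := (abs_sub_le_iff.mp h).1
  have hs : ∑ m ∈ Finset.range 2, x ^ m / m.factorial = 1 + x := by
    simp [Finset.sum_range_succ]
  rw [hs] at h1
  have h2 : |x| ^ 2 = x ^ 2 := sq_abs x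
  rw [h2] at h1
  norm_num [Nat.factorial] at h1
  nlinarith [sq_nonneg x]

lemma pos_val (g : S →ᵇ ℝ) (μ ν : Measure S) [IsProbabilityMeasure μ] [IsProbabilityMeasure ν]
    (hab : ∫ x, g x ∂ν < ∫ x, g x ∂μ) :
    ∃ t : ℝ, 0 < t ∧ t ≤ 1 ∧
      0 < t * (∫ x, g x ∂μ) - Real.log (∫ x, Real.exp (t * g x) ∂ν) := by
  set a := ∫ x, g x ∂μ with ha
  set b := ∫ x, g x ∂ν with hb
  set M := ‖g‖ with hM
  have hM0 : 0 ≤ M := norm_nonneg g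
  have hδ : 0 < a - b := by linarith
  set t := min (1 / (M + 1)) ((a - b) / (M + 1) ^ 2) with htdef
  have ht0 : 0 < t := lt_min (by positivity) (by positivity)
  have ht1 : t ≤ 1 := by
    refine (min_le_left _ _).trans ?_
    rw [div_le_one (by linarith)]; linarith
  have htM : t * M ≤ 1 := by
    have : t ≤ 1 / (M + 1) := min_le_left _ _
    have h2 : t * M ≤ (1 / (M + 1)) * M := by
      exact mul_le_mul_of_nonneg_right this hM0
    have : (1 / (M + 1)) * M ≤ 1 := by
      rw [div_mul_eq_mul_div, div_le_one (by linarith)]; linarith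
    linarith
  refine ⟨t, ht0, ht1, ?_⟩
  have hbound : ∀ x, |t * g x| ≤ 1 := by
    intro x
    rw [abs_mul, abs_of_pos ht0]
    calc t * |g x| ≤ t * M :=
          mul_le_mul_of_nonneg_left (g.norm_coe_le_norm x) ht0.le
      _ ≤ 1 := htM
  have hie : Integrable (fun x => Real.exp (t * g x)) ν := by
    have := exp_comp_integrable (t • g) ν
    simpa using this
  have hig : Integrable (fun x => g x) ν := g.integrable ν
  have hadd : Integrable (fun x => 1 + t * g x) ν := by
    exact (integrable_const 1).add (hig.const_mul t)
  have hiR : Integrable (fun x => 1 + t * g x + t ^ 2 * M ^ 2) ν := by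
    exact hadd.add (integrable_const _)
  have hI : ∫ x, Real.exp (t * g x) ∂ν ≤ 1 + t * b + t ^ 2 * M ^ 2 := by
    have hpt : ∀ x, Real.exp (t * g x) ≤ 1 + t * g x + t ^ 2 * M ^ 2 := by
      intro x
      have h1 := exp_quad_bound (hbound x)
      have h2 : (t * g x) ^ 2 ≤ t ^ 2 * M ^ 2 := by
        have hgx : |g x| ≤ M := g.norm_coe_le_norm x
        have h5 : |g x| ^ 2 ≤ M ^ 2 := pow_le_pow_left₀ (abs_nonneg _) hgx 2
        nlinarith [sq_nonneg t, sq_abs (g x)]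
      linarith
    calc ∫ x, Real.exp (t * g x) ∂ν ≤ ∫ x, (1 + t * g x + t ^ 2 * M ^ 2) ∂ν :=
          integral_mono hie hiR hpt
      _ = 1 + t * b + t ^ 2 * M ^ 2 := by
          rw [integral_add hadd (integrable_const _),
            integral_add (integrable_const 1) (hig.const_mul t),
            MeasureTheory.integral_const_mul]
          simp [← hb]
  have hpos : 0 < ∫ x, Real.exp (t * g x) ∂ν := by
    have hpt : ∀ x, Real.exp (-(1:ℝ)) ≤ Real.exp (t * g x) := by
      intro x
      apply Real.exp_le_exp.mpr
      have := (abs_le.mp (hbound x)).1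
      linarith
    have := integral_mono (integrable_const (Real.exp (-(1:ℝ)))) hie hpt
    simp only [integral_const, probReal_univ, one_smul] at this
    exact (Real.exp_pos _).trans_le this
  have hlog : Real.log (∫ x, Real.exp (t * g x) ∂ν) ≤ t * b + t ^ 2 * M ^ 2 := by
    have := Real.log_le_sub_one_of_pos hpos
    linarith
  have htfin : t * M ^ 2 < a - b := by
    have ht2 : t ≤ (a - b) / (M + 1) ^ 2 := min_le_right _ _
    have h3 : t * M ^ 2 ≤ ((a - b) / (M + 1) ^ 2) * M ^ 2 :=
      mul_le_mul_of_nonneg_right ht2 (by positivity)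
    have h4 : ((a - b) / (M + 1) ^ 2) * M ^ 2 < a - b := by
      rw [div_mul_eq_mul_div, div_lt_iff₀ (by positivity)]
      nlinarith
    linarith
  nlinarith [ht0]

end Helpers

/-- For admissible `Γ`: `G_Γ(μ‖ν) ≥ 0`, with equality iff `μ = ν`. -/
theorem gDiv_nonneg_and_eq_zero_iff
    {S : Type*} [TopologicalSpace S] [PolishSpace S] [MeasurableSpace S] [BorelSpace S]
    (Γ : Set (S →ᵇ ℝ)) (hΓ : Admissible Γ)
    (μ ν : Measure S) [IsProbabilityMeasure μ] [IsProbabilityMeasure ν] :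
    0 ≤ gDiv Γ μ ν ∧ (gDiv Γ μ ν = 0 ↔ μ = ν) := by
  obtain ⟨hconv, -, hsymm, hconst, hdet⟩ := hΓ
  have hnonneg : ∀ (μ' : Measure S), IsProbabilityMeasure μ' → (0:EReal) ≤ gDiv Γ μ' ν := by
    intro μ' hμ'
    have h0 : BoundedContinuousFunction.const S (0:ℝ) ∈ Γ := hconst 0
    have hval : ((∫ x, (BoundedContinuousFunction.const S (0:ℝ)) x ∂μ' -
        Real.log (∫ x, Real.exp ((BoundedContinuousFunction.const S (0:ℝ)) x) ∂ν) : ℝ) : EReal)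
        = 0 := by simp
    have hle : ((∫ x, (BoundedContinuousFunction.const S (0:ℝ)) x ∂μ' -
        Real.log (∫ x, Real.exp ((BoundedContinuousFunction.const S (0:ℝ)) x) ∂ν) : ℝ) : EReal)
        ≤ gDiv Γ μ' ν :=
      le_iSup₂ (f := fun g (_ : g ∈ Γ) =>
        (((∫ x, g x ∂μ') - Real.log (∫ x, Real.exp (g x) ∂ν) : ℝ) : EReal)) _ h0
    rwa [hval] at hle
  refine ⟨hnonneg μ inferInstance, ?_, ?_⟩
  · intro h
    by_contra hne
    obtain ⟨g, hg, hgne⟩ := hdet μ ν inferInstance inferInstance hne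
    obtain ⟨g', hg', hlt⟩ : ∃ g' ∈ Γ, ∫ x, g' x ∂ν < ∫ x, g' x ∂μ := by
      rcases hgne.lt_or_gt with hlt | hlt
      · refine ⟨-g, hsymm g hg, ?_⟩
        simp only [BoundedContinuousFunction.coe_neg, Pi.neg_apply, integral_neg]
        linarith
      · exact ⟨g, hg, hlt⟩
    obtain ⟨t, ht0, ht1, hval⟩ := pos_val g' μ ν hlt
    have hzero : (0 : S →ᵇ ℝ) ∈ Γ := by
      have h := hconst 0
      have : BoundedContinuousFunction.const S (0:ℝ) = 0 := rfl
      rwa [this] at h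
    have hmem : t • g' ∈ Γ := hconv.smul_mem_of_zero_mem hzero hg' ⟨ht0.le, ht1⟩
    have hle : (((∫ x, (t • g') x ∂μ) -
        Real.log (∫ x, Real.exp ((t • g') x) ∂ν) : ℝ) : EReal) ≤ gDiv Γ μ ν :=
      le_iSup₂ (f := fun g (_ : g ∈ Γ) =>
        (((∫ x, g x ∂μ) - Real.log (∫ x, Real.exp (g x) ∂ν) : ℝ) : EReal)) _ hmem
    rw [h] at hle
    have heq : (∫ x, (t • g') x ∂μ) - Real.log (∫ x, Real.exp ((t • g') x) ∂ν)
        = t * (∫ x, g' x ∂μ) - Real.log (∫ x, Real.exp (t * g' x) ∂ν) := by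
      simp [BoundedContinuousFunction.coe_smul, smul_eq_mul, MeasureTheory.integral_const_mul]
    rw [heq] at hle
    have := EReal.coe_nonpos.mp hle
    linarith
  · rintro rfl
    refine le_antisymm ?_ (hnonneg μ inferInstance)
    refine iSup₂_le fun g hg => ?_
    exact EReal.coe_nonpos.mpr (sub_nonpos.mpr (jensen_aux g μ))
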